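/- Let X be an n×d matrix and q ∈ ℝ^d, both with possibly negative entries, with ‖q‖₁ > 0 and z' = Σ_i |x_i|·|q| > 0 where |x_i| and |q| denote entrywise absolute values. Sample a column j with probability |q_j|·‖y_j‖₁/z' (where ‖y_j‖₁ = Σ_i |x_{ij}|), then a row i with probability |x_{ij}|/‖y_j‖₁, and define Z_i = sgn(x_{ij})·sgn(q_j)·1[row i chosen]. Then E[Z_i] = (x_i·q)/z'. -/

import Mathlib

open Real

/-- The sign function: `sgn u = 1` if `u ≥ 0`, else `-1`. -/
noncomputable def sgn (u : ℝ) : ℝ := if 0 ≤ u then 1 else -1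

/-- Sign-trick wedge sampling on general inputs is unbiased (up to the factor `z'`):
sampling column `j` with probability `|q_j| ‖y_j‖₁ / z'`, then row `i` with probability
`|x_{ij}| / ‖y_j‖₁`, and returning `sgn(x_{ij}) sgn(q_j)` gives expectation `(x_i · q)/z'`. -/
theorem stmt_10 (n d : ℕ) (x : Fin n → Fin d → ℝ) (q : Fin d → ℝ)
    (c : Fin d → ℝ) (hc : ∀ j, c j = ∑ i, |x i j|) (hcpos : ∀ j, 0 < c j)
    (hq1 : 0 < ∑ j, |q j|)
    (z' : ℝ) (hz : z' = ∑ i, ∑ j, |x i j| * |q j|) (hzpos : 0 < z') (i : Fin n) :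
    ∑ j, (sgn (x i j) * sgn (q j)) * (|x i j| / c j) * (|q j| * c j / z')
      = (∑ j, x i j * q j) / z' := by
  rw [Finset.sum_div]
  refine Finset.sum_congr rfl fun j _ => ?_
  have hcj := (hcpos j).ne'
  have hs : ∀ u : ℝ, sgn u * |u| = u := by
    intro u; unfold sgn; split <;> simp_all [abs_of_nonneg, abs_of_neg, le_of_not_ge]
  field_simp
  calc sgn (x i j) * sgn (q j) * |x i j| * |q j|
      = (sgn (x i j) * |x i j|) * (sgn (q j) * |q j|) := by ring
    _ = x i j * q j := by rw [hs, hs]
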